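/- arXiv:1812.01530 — 3 statements merged into one kernel-verified Lean document; each statement's English description precedes it below -/
import Mathlib

section
/- Let X be a normal topological space, A a closed subset of a locally finite closed cover 𝒜 of X, and define U = X \ ⋃ { ⋂_{i∈I} A_i : I finite, (⋂_{i∈I} A_i) ∩ A = ∅, ⋂_{i∈I} A_i ≠ ∅ }. Then U is an open neighborhood of A, and replacing A by any closed neighborhood B of A with B ⊆ U yields a cover with the same nerve as 𝒜. -/
/-- For a locally finite closed cover `A` of a normal space and a member `A i₀`,
the set `U = X \ ⋃ {A_I : I finite, A_I ≠ ∅, A_I ∩ A i₀ = ∅}` is an open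
neighborhood of `A i₀`, and replacing `A i₀` by any closed neighborhood `B ⊆ U`
of it yields a cover with the same nerve. -/
theorem stmt3 {ι : Type*} [DecidableEq ι] {X : Type*} [TopologicalSpace X] [NormalSpace X]
    (A : ι → Set X) (hclosed : ∀ i, IsClosed (A i))
    (hcover : ⋃ i, A i = Set.univ) (hlf : LocallyFinite A) (i₀ : ι)
    (U : Set X)
    (hU : U = (⋃ I ∈ {I : Finset ι | (⋂ i ∈ I, A i).Nonempty ∧ (⋂ i ∈ I, A i) ∩ A i₀ = ∅},
        ⋂ i ∈ I, A i)ᶜ) :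
    IsOpen U ∧ A i₀ ⊆ U ∧
      ∀ B : Set X, IsClosed B → A i₀ ⊆ interior B → B ⊆ U →
        (⋃ i, Function.update A i₀ B i = Set.univ) ∧
        ∀ I : Finset ι,
          (⋂ i ∈ I, Function.update A i₀ B i).Nonempty ↔ (⋂ i ∈ I, A i).Nonempty := by
  set 𝒮 : Set (Finset ι) :=
    {I : Finset ι | (⋂ i ∈ I, A i).Nonempty ∧ (⋂ i ∈ I, A i) ∩ A i₀ = ∅} with h𝒮
  -- the bad union is closed
  have hlf' : LocallyFinite (fun I : 𝒮 => ⋂ i ∈ (I : Finset ι), A i) := by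
    intro x
    obtain ⟨V, hV, hfin⟩ := hlf x
    refine ⟨V, hV, ?_⟩
    have hsub : {I : 𝒮 | ((⋂ i ∈ (I : Finset ι), A i) ∩ V).Nonempty} ⊆
        Subtype.val ⁻¹' ((hfin.toFinset.powerset : Finset (Finset ι)) : Set (Finset ι)) := by
      intro I hI
      simp only [Set.mem_preimage, Finset.coe_powerset, Set.mem_setOf_eq,
        Finset.mem_coe, Finset.mem_powerset]
      intro i hi
      obtain ⟨y, hy1, hy2⟩ := hI
      exact hfin.mem_toFinset.mpr ⟨y, Set.mem_iInter₂.mp hy1 i hi, hy2⟩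
    exact Set.Finite.subset
      ((Set.finite_coe_iff.mp inferInstance : ((hfin.toFinset.powerset : Finset (Finset ι)) :
        Set (Finset ι)).Finite).preimage Subtype.val_injective.injOn) hsub
  have hclosedBad : IsClosed (⋃ I ∈ 𝒮, ⋂ i ∈ I, A i) := by
    rw [Set.biUnion_eq_iUnion]
    exact hlf'.isClosed_iUnion fun I => isClosed_biInter fun i _ => hclosed i
  have hopen : IsOpen U := by rw [hU]; exact hclosedBad.isOpen_compl
  have hAU : A i₀ ⊆ U := by
    intro x hx
    rw [hU]
    intro hmem
    simp only [Set.mem_iUnion] at hmem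
    obtain ⟨I, hI, hxI⟩ := hmem
    exact Set.eq_empty_iff_forall_notMem.mp hI.2 x ⟨hxI, hx⟩
  refine ⟨hopen, hAU, fun B hBclosed hABint hBU => ?_⟩
  have hAB : A i₀ ⊆ B := hABint.trans interior_subset
  constructor
  · apply Set.eq_univ_of_univ_subset
    rw [← hcover]
    refine Set.iUnion_subset fun i x hx => ?_
    by_cases h : i = i₀
    · subst h
      exact Set.mem_iUnion.mpr ⟨i, by simp [Function.update_self]; exact hAB hx⟩
    · exact Set.mem_iUnion.mpr ⟨i, by simp [Function.update_of_ne h]; exact hx⟩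
  · intro I
    by_cases h : i₀ ∈ I
    · have herase : ∀ (f : ι → Set X), ⋂ i ∈ I, f i = f i₀ ∩ ⋂ i ∈ I.erase i₀, f i := by
        intro f
        conv_lhs => rw [← Finset.insert_erase h]
        rw [Finset.set_biInter_insert]
      rw [herase, herase]
      have heq : ⋂ i ∈ I.erase i₀, Function.update A i₀ B i = ⋂ i ∈ I.erase i₀, A i := by
        apply Set.iInter₂_congr
        intro i hi
        exact Function.update_of_ne (Finset.ne_of_mem_erase hi) _ _
      rw [Function.update_self, heq]
      constructor
      · rintro ⟨x, hxB, hxI⟩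
        by_contra hempty
        rw [Set.not_nonempty_iff_eq_empty] at hempty
        have hS : I.erase i₀ ∈ 𝒮 := by
          refine ⟨⟨x, hxI⟩, ?_⟩
          rw [← hempty]
          ext y; simp [and_comm]
        have : x ∈ ⋃ I ∈ 𝒮, ⋂ i ∈ I, A i :=
          Set.mem_biUnion hS hxI
        exact (hU ▸ hBU hxB) this
      · rintro ⟨x, hx1, hx2⟩
        exact ⟨x, hAB hx1, hx2⟩
    · have heq : ⋂ i ∈ I, Function.update A i₀ B i = ⋂ i ∈ I, A i := by
        apply Set.iInter₂_congr
        intro i hi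
        exact Function.update_of_ne (by rintro rfl; exact h hi) _ _
      rw [heq]
end

section
/- Let X be a paracompact Hausdorff space, let A, B ⊆ X be closed with A ⊆ interior(B) and B of finite covering dimension, and let W ⊆ A be open in X. Then any family 𝒰 of open subsets of X covering X \ W can be refined by a locally finite open family 𝒜 covering X \ W such that the subfamily of members of 𝒜 meeting A has order at most dim B + 1. -/
/-- Let `X` be paracompact Hausdorff, `A ⊆ interior B` closed sets with `B` of
covering dimension at most `n`, and `W ⊆ A` open. Then any open family covering
`X \ W` can be refined by a locally finite open family covering `X \ W` whose
subfamily of members meeting `A` has order at most `n + 1`. -/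
theorem stmt6 {X : Type*} [TopologicalSpace X] [ParacompactSpace X] [T2Space X]
    (A B : Set X) (hA : IsClosed A) (hB : IsClosed B) (hAB : A ⊆ interior B)
    (n : ℕ)
    (hdimB : ∀ 𝒱 : Set (Set X), (∀ V ∈ 𝒱, IsOpen V) → B ⊆ ⋃₀ 𝒱 →
      ∃ 𝒲 : Set (Set X), (∀ W' ∈ 𝒲, IsOpen W') ∧ B ⊆ ⋃₀ 𝒲 ∧
        (∀ W' ∈ 𝒲, ∃ V ∈ 𝒱, W' ⊆ V) ∧
        ∀ x ∈ B, {W' | W' ∈ 𝒲 ∧ x ∈ W'}.encard ≤ (n + 1 : ℕ))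
    (W : Set X) (hW : IsOpen W) (hWA : W ⊆ A)
    (𝒰 : Set (Set X)) (h𝒰open : ∀ U ∈ 𝒰, IsOpen U) (h𝒰cover : Set.univ \ W ⊆ ⋃₀ 𝒰) :
    ∃ 𝒜 : Set (Set X), (∀ C ∈ 𝒜, IsOpen C) ∧ Set.univ \ W ⊆ ⋃₀ 𝒜 ∧
      (∀ C ∈ 𝒜, ∃ U ∈ 𝒰, C ⊆ U) ∧
      (∀ x : X, ∃ N ∈ nhds x, {C | C ∈ 𝒜 ∧ (C ∩ N).Nonempty}.Finite) ∧
      ∀ x : X, {C | C ∈ 𝒜 ∧ (C ∩ A).Nonempty ∧ x ∈ C}.encard ≤ (n + 1 : ℕ) := by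
  classical
  -- Step 1: apply the dimension hypothesis to the open cover 𝒰 ∪ {W} of B.
  obtain ⟨𝒲, h𝒲open, h𝒲cover, h𝒲ref, h𝒲ord⟩ := hdimB (𝒰 ∪ {W})
    (by
      intro V hV
      rcases hV with hV | hV
      · exact h𝒰open V hV
      · rw [Set.mem_singleton_iff] at hV; exact hV ▸ hW)
    (by
      intro b _hb
      by_cases hbW : b ∈ W
      · exact ⟨W, Or.inr rfl, hbW⟩
      · obtain ⟨U, hU, hbU⟩ := h𝒰cover ⟨trivial, hbW⟩
        exact ⟨U, Or.inl hU, hbU⟩)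
  -- Step 2: intermediate family.
  set 𝒲₀ : Set (Set X) := {W' | W' ∈ 𝒲 ∧ ∃ U ∈ 𝒰, W' ⊆ U} with h𝒲₀def
  set 𝒜m : Set (Set X) :=
    ((fun S => S ∩ interior B) '' 𝒲₀) ∪ ((fun U => U \ A) '' 𝒰) with h𝒜mdef
  have hmo : ∀ D ∈ 𝒜m, IsOpen D := by
    rintro D (⟨S, hS, rfl⟩ | ⟨U, hU, rfl⟩)
    · exact (h𝒲open S hS.1).inter isOpen_interior
    · exact (h𝒰open U hU).sdiff hA
  have hmr : ∀ D ∈ 𝒜m, ∃ U ∈ 𝒰, D ⊆ U := by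
    rintro D (⟨S, hS, rfl⟩ | ⟨U, hU, rfl⟩)
    · obtain ⟨U, hU, hsub⟩ := hS.2
      exact ⟨U, hU, Set.inter_subset_left.trans hsub⟩
    · exact ⟨U, hU, Set.diff_subset⟩
  have hmc : ∀ x : X, x ∉ W → ∃ D ∈ 𝒜m, x ∈ D := by
    intro x hxW
    by_cases hxA : x ∈ A
    · have hxB : x ∈ B := interior_subset (hAB hxA)
      obtain ⟨W', hW', hxW'⟩ := h𝒲cover hxB
      obtain ⟨V, hV, hsubV⟩ := h𝒲ref W' hW'
      rcases hV with hV | hV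
      · exact ⟨W' ∩ interior B, Or.inl ⟨W', ⟨hW', V, hV, hsubV⟩, rfl⟩, hxW', hAB hxA⟩
      · rw [Set.mem_singleton_iff] at hV
        exact absurd (hsubV hxW') (hV ▸ hxW)
    · obtain ⟨U, hU, hxU⟩ := h𝒰cover ⟨trivial, hxW⟩
      exact ⟨U \ A, Or.inr ⟨U, hU, rfl⟩, hxU, hxA⟩
  have hmord : ∀ x : X, {D | D ∈ 𝒜m ∧ (D ∩ A).Nonempty ∧ x ∈ D}.encard ≤ (n + 1 : ℕ) := by
    intro x
    by_cases hxB : x ∈ interior B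
    · have hsub : {D | D ∈ 𝒜m ∧ (D ∩ A).Nonempty ∧ x ∈ D} ⊆
          (fun S => S ∩ interior B) '' {W' | W' ∈ 𝒲 ∧ x ∈ W'} := by
        rintro D ⟨hD, hne, hxD⟩
        rcases hD with ⟨S, hS, rfl⟩ | ⟨U, hU, rfl⟩
        · exact ⟨S, ⟨hS.1, hxD.1⟩, rfl⟩
        · obtain ⟨a, ha1, ha2⟩ := hne
          exact absurd ha2 ha1.2
      calc {D | D ∈ 𝒜m ∧ (D ∩ A).Nonempty ∧ x ∈ D}.encard
          ≤ ((fun S => S ∩ interior B) '' {W' | W' ∈ 𝒲 ∧ x ∈ W'}).encard :=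
            Set.encard_mono hsub
        _ ≤ {W' | W' ∈ 𝒲 ∧ x ∈ W'}.encard := Set.encard_image_le _ _
        _ ≤ (n + 1 : ℕ) := h𝒲ord x (interior_subset hxB)
    · have : {D | D ∈ 𝒜m ∧ (D ∩ A).Nonempty ∧ x ∈ D} = ∅ := by
        apply Set.eq_empty_of_forall_notMem
        rintro D ⟨hD, hne, hxD⟩
        rcases hD with ⟨S, hS, rfl⟩ | ⟨U, hU, rfl⟩
        · exact hxB hxD.2
        · obtain ⟨a, ha1, ha2⟩ := hne
          exact ha1.2 ha2
      simp [this]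
  -- Step 3: paracompactness, precise refinement of 𝒜m ∪ {W}.
  have hcov : ⋃ i : ↥(𝒜m ∪ {W}), (i : Set X) = Set.univ := by
    apply Set.eq_univ_of_forall
    intro x
    by_cases hxW : x ∈ W
    · exact Set.mem_iUnion.2 ⟨⟨W, Or.inr rfl⟩, hxW⟩
    · obtain ⟨D, hD, hxD⟩ := hmc x hxW
      exact Set.mem_iUnion.2 ⟨⟨D, Or.inl hD⟩, hxD⟩
  obtain ⟨v, hvopen, hvcov, hvlf, hvsub⟩ :=
    precise_refinement (fun i : ↥(𝒜m ∪ {W}) => (i : Set X))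
      (by
        rintro ⟨i, hi | hi⟩
        · exact hmo i hi
        · rw [Set.mem_singleton_iff] at hi; exact hi ▸ hW)
      hcov
  refine ⟨{S | ∃ i : ↥(𝒜m ∪ {W}), (i : Set X) ∈ 𝒜m ∧ S = v i}, ?_, ?_, ?_, ?_, ?_⟩
  · rintro C ⟨i, _, rfl⟩
    exact hvopen i
  · rintro x ⟨-, hxW⟩
    have hx : x ∈ ⋃ i, v i := hvcov ▸ Set.mem_univ x
    obtain ⟨i, hxi⟩ := Set.mem_iUnion.1 hx
    rcases i.2 with hi | hi
    · exact ⟨v i, ⟨i, hi, rfl⟩, hxi⟩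
    · rw [Set.mem_singleton_iff] at hi
      exact absurd (hi ▸ hvsub i hxi) hxW
  · rintro C ⟨i, hi, rfl⟩
    obtain ⟨U, hU, hsub⟩ := hmr _ hi
    exact ⟨U, hU, (hvsub i).trans hsub⟩
  · intro x
    obtain ⟨N, hN, hfin⟩ := hvlf x
    refine ⟨N, hN, ?_⟩
    have hsub : {C | C ∈ {S | ∃ i : ↥(𝒜m ∪ {W}), (i : Set X) ∈ 𝒜m ∧ S = v i}
        ∧ (C ∩ N).Nonempty} ⊆ v '' {i | (v i ∩ N).Nonempty} := by
      rintro C ⟨⟨i, _, rfl⟩, hne⟩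
      exact ⟨i, hne, rfl⟩
    exact ((hfin.image v).subset hsub)
  · intro x
    set T : Set ↥(𝒜m ∪ {W}) :=
      {i | (i : Set X) ∈ 𝒜m ∧ ((i : Set X) ∩ A).Nonempty ∧ x ∈ (i : Set X)} with hTdef
    have hsub : {C | C ∈ {S | ∃ i : ↥(𝒜m ∪ {W}), (i : Set X) ∈ 𝒜m ∧ S = v i}
        ∧ (C ∩ A).Nonempty ∧ x ∈ C} ⊆ v '' T := by
      rintro C ⟨⟨i, hi, rfl⟩, hne, hx⟩
      obtain ⟨a, ha1, ha2⟩ := hne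
      exact ⟨i, ⟨hi, ⟨a, hvsub i ha1, ha2⟩, hvsub i hx⟩, rfl⟩
    have hTcard : T.encard ≤ (n + 1 : ℕ) := by
      have him : Subtype.val '' T ⊆ {D | D ∈ 𝒜m ∧ (D ∩ A).Nonempty ∧ x ∈ D} := by
        rintro D ⟨i, hi, rfl⟩
        exact hi
      calc T.encard = (Subtype.val '' T).encard :=
            (Subtype.val_injective.encard_image T).symm
        _ ≤ _ := Set.encard_mono him
        _ ≤ (n + 1 : ℕ) := hmord x
    calc {C | C ∈ {S | ∃ i : ↥(𝒜m ∪ {W}), (i : Set X) ∈ 𝒜m ∧ S = v i}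
        ∧ (C ∩ A).Nonempty ∧ x ∈ C}.encard
        ≤ (v '' T).encard := Set.encard_mono hsub
      _ ≤ T.encard := Set.encard_image_le _ _
      _ ≤ (n + 1 : ℕ) := hTcard
end

section
/- Let X be a topological space, 𝒱 = {V_i}_{i∈J} a locally finite open cover of X, and 𝒮 = {S_i}_{i∈J} a shrinking of 𝒱 (meaning closure(S_i) ⊆ V_i for all i). Then for every point x ∈ X there is an open neighborhood W of x such that for every finite I ⊆ J, if W ∩ (⋂_{i∈I} S_i) ≠ ∅ then W ⊆ ⋂_{i∈I} V_i. -/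
/-- Let `V` be a locally finite open cover of `X` and `S` a shrinking of `V`.
Then every point `x` has an open neighborhood `W` such that `W ⊆ ⋂_{i ∈ I} V i`
whenever `W` meets `⋂_{i ∈ I} S i`, for every finite `I`. -/
theorem stmt7 {X : Type*} [TopologicalSpace X] {ι : Type*}
    (V S : ι → Set X)
    (hVopen : ∀ i, IsOpen (V i)) (hVcover : ⋃ i, V i = Set.univ) (hVlf : LocallyFinite V)
    (hSopen : ∀ i, IsOpen (S i)) (hScover : ⋃ i, S i = Set.univ)
    (hshr : ∀ i, closure (S i) ⊆ V i) :
    ∀ x : X, ∃ W : Set X, IsOpen W ∧ x ∈ W ∧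
      ∀ I : Finset ι, (W ∩ ⋂ i ∈ I, S i).Nonempty → W ⊆ ⋂ i ∈ I, V i := by
  intro x
  have hSlf : LocallyFinite S :=
    hVlf.subset fun i => (subset_closure).trans (hshr i)
  obtain ⟨U, hU, hUfin⟩ := hSlf x
  classical
  set F : Finset ι := hUfin.toFinset with hF
  set W : Set X := interior U ∩
      ⋂ i ∈ F, (if x ∈ closure (S i) then V i else (closure (S i))ᶜ) with hW
  have hWopen : IsOpen W := by
    apply IsOpen.inter isOpen_interior
    apply isOpen_biInter_finset
    intro i _
    split
    · exact hVopen i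
    · exact isClosed_closure.isOpen_compl
  have hxW : x ∈ W := by
    constructor
    · exact mem_interior_iff_mem_nhds.2 hU
    · refine Set.mem_iInter₂.2 fun i _ => ?_
      split_ifs with h
      · exact hshr i h
      · exact h
  have key : ∀ i, (W ∩ S i).Nonempty → W ⊆ V i := by
    rintro i ⟨y, hyW, hyS⟩
    have hiF : i ∈ F := by
      rw [hF, Set.Finite.mem_toFinset]
      exact ⟨y, hyS, interior_subset hyW.1⟩
    by_cases h : x ∈ closure (S i)
    · intro z hz
      have := Set.mem_iInter₂.1 hz.2 i hiF
      simpa [h] using this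
    · exfalso
      have := Set.mem_iInter₂.1 hyW.2 i hiF
      rw [if_neg h] at this
      exact this (subset_closure hyS)
  refine ⟨W, hWopen, hxW, ?_⟩
  rintro I ⟨y, hyW, hyS⟩
  intro z hz
  refine Set.mem_iInter₂.2 fun i hi => ?_
  exact key i ⟨y, hyW, Set.mem_iInter₂.1 hyS i hi⟩ hz
end
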